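/- arXiv:1904.08391 — 6 statements merged into one kernel-verified Lean document; each statement's English description precedes it below -/
import Mathlib

section
/- Let P and Q be probability distributions on {0,1}^m. Then d_{TV}(P,Q) ≤ d_G(P,Q) ≤ √(2·ln 2·m) · d_{TV}(P,Q), where d_G is the subgaussian distance and d_{TV} the total variation distance. -/
open scoped BigOperators

/-- A probability mass function on a finite set. -/
def IsPMF {X : Type*} [Fintype X] (P : X → ℝ) : Prop :=
  (∀ x, 0 ≤ P x) ∧ ∑ x, P x = 1

/-- `f : {0,1}^m → ℝ` is a subgaussian test function: `f(U_m)` is mean-zero and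
subgaussian with parameter `1/2`. -/
def SubgTest (m : ℕ) (f : (Fin m → Bool) → ℝ) : Prop :=
  (∑ x, ((2 : ℝ) ^ m)⁻¹ * f x) = 0 ∧
  ∀ t : ℝ, Real.log (∑ x, ((2 : ℝ) ^ m)⁻¹ * Real.exp (t * f x)) ≤ t ^ 2 / 8

/-- The subgaussian distance between distributions on `{0,1}^m`. -/
noncomputable def dG (m : ℕ) (P Q : (Fin m → Bool) → ℝ) : ℝ :=
  sSup {r : ℝ | ∃ f, SubgTest m f ∧ r = ∑ x, (P x - Q x) * f x}

/-- Total variation distance. -/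
noncomputable def dTV (m : ℕ) (P Q : (Fin m → Bool) → ℝ) : ℝ :=
  (1 / 2) * ∑ x, |P x - Q x|

/-- Hoeffding's lemma for a Bernoulli random variable: for `p ∈ [0,1]`,
`log (1 - p + p * exp t) ≤ p * t + t² / 8`. -/
lemma bernoulli_hoeffding {p : ℝ} (hp : 0 ≤ p) (hp1 : p ≤ 1) (t : ℝ) :
    Real.log (1 - p + p * Real.exp t) ≤ p * t + t ^ 2 / 8 := by
  have hD : ∀ s : ℝ, 0 < 1 - p + p * Real.exp s := by
    intro s
    rcases eq_or_lt_of_le hp1 with h | h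
    · subst h; simpa using Real.exp_pos s
    · have h1 : 0 < 1 - p := by linarith
      have h2 : 0 ≤ p * Real.exp s := mul_nonneg hp (Real.exp_pos s).le
      linarith
  set φ : ℝ → ℝ := fun s => p * s + s ^ 2 / 8 - Real.log (1 - p + p * Real.exp s) with hφdef
  set φ' : ℝ → ℝ := fun s => p + s / 4 - p * Real.exp s / (1 - p + p * Real.exp s) with hφ'def
  have hder : ∀ s : ℝ, HasDerivAt φ (φ' s) s := by
    intro s
    have hdD : HasDerivAt (fun u : ℝ => 1 - p + p * Real.exp u) (p * Real.exp s) s :=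
      ((Real.hasDerivAt_exp s).const_mul p).const_add (1 - p)
    have hlog : HasDerivAt (fun u : ℝ => Real.log (1 - p + p * Real.exp u))
        (p * Real.exp s / (1 - p + p * Real.exp s)) s := hdD.log (hD s).ne'
    have h1 : HasDerivAt (fun u : ℝ => p * u + u ^ 2 / 8) (p + s * 2 / 8 * 1) s := by
      have := ((hasDerivAt_id s).const_mul p).add
        (((hasDerivAt_pow 2 s)).div_const 8)
      simpa [mul_comm, Pi.add_def] using this
    have := h1.sub hlog
    refine this.congr_deriv ?_
    simp only [hφ'def]
    ring
  have hder' : ∀ s : ℝ, HasDerivAt φ'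
      (1 / 4 - (1 - p) * (p * Real.exp s) / (1 - p + p * Real.exp s) ^ 2) s := by
    intro s
    have hdD : HasDerivAt (fun u : ℝ => 1 - p + p * Real.exp u) (p * Real.exp s) s :=
      ((Real.hasDerivAt_exp s).const_mul p).const_add (1 - p)
    have hN : HasDerivAt (fun u : ℝ => p * Real.exp u) (p * Real.exp s) s :=
      (Real.hasDerivAt_exp s).const_mul p
    have hq : HasDerivAt (fun u : ℝ => p * Real.exp u / (1 - p + p * Real.exp u))
        ((p * Real.exp s * (1 - p + p * Real.exp s) - p * Real.exp s * (p * Real.exp s)) /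
          (1 - p + p * Real.exp s) ^ 2) s := hN.div hdD (hD s).ne'
    have h1 : HasDerivAt (fun u : ℝ => p + u / 4) (1 / 4) s := by
      have := ((hasDerivAt_id s).div_const 4).const_add p
      simpa using this
    have := h1.sub hq
    refine this.congr_deriv ?_
    have := (hD s).ne'
    field_simp
    ring
  have hmono : Monotone φ' := by
    apply monotone_of_deriv_nonneg (fun s => (hder' s).differentiableAt)
    intro s
    rw [(hder' s).deriv]
    have hkey : 4 * ((1 - p) * (p * Real.exp s)) ≤ (1 - p + p * Real.exp s) ^ 2 := by
      nlinarith [sq_nonneg (1 - p - p * Real.exp s)]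
    have h2 : (0:ℝ) < (1 - p + p * Real.exp s) ^ 2 := pow_pos (hD s) 2
    rw [sub_nonneg, div_le_iff₀ h2]
    linarith
  have hφ'0 : φ' 0 = 0 := by
    simp [hφ'def]
  have hφ0 : φ 0 = 0 := by
    simp [hφdef]
  have hcont : Continuous φ := by
    have : Differentiable ℝ φ := fun s => (hder s).differentiableAt
    exact this.continuous
  have hmain : 0 ≤ φ t := by
    rcases le_total 0 t with ht | ht
    · have hm : MonotoneOn φ (Set.Ici (0:ℝ)) := by
        apply monotoneOn_of_deriv_nonneg (convex_Ici 0) hcont.continuousOn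
          (fun s _ => (hder s).differentiableAt.differentiableWithinAt)
        intro s hs
        rw [(hder s).deriv]
        rw [← hφ'0]
        exact hmono (le_of_lt (by simpa using hs))
      have := hm (Set.self_mem_Ici) (Set.mem_Ici.2 ht) ht
      simpa [hφ0] using this
    · have hm : AntitoneOn φ (Set.Iic (0:ℝ)) := by
        apply antitoneOn_of_deriv_nonpos (convex_Iic 0) hcont.continuousOn
          (fun s _ => (hder s).differentiableAt.differentiableWithinAt)
        intro s hs
        rw [(hder s).deriv]
        rw [← hφ'0]
        exact hmono (le_of_lt (by simpa using hs))
      have := hm (Set.mem_Iic.2 ht) (Set.self_mem_Iic) ht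
      simpa [hφ0] using this
  have := hmain
  rw [hφdef] at this
  simp only at this
  linarith

lemma subg_uniform_sum (m : ℕ) : ∑ _x : Fin m → Bool, ((2:ℝ)^m)⁻¹ = 1 := by
  rw [Finset.sum_const, Finset.card_univ]
  have h : Fintype.card (Fin m → Bool) = 2 ^ m := by simp
  rw [h, nsmul_eq_mul]
  push_cast
  rw [mul_inv_cancel₀ (by positivity)]

/-- Any subgaussian test function is pointwise bounded by `√(m log 2 / 2)`. -/
lemma subg_pointwise_bound {m : ℕ} {f : (Fin m → Bool) → ℝ} (hf : SubgTest m f)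
    (x₀ : Fin m → Bool) : |f x₀| ≤ Real.sqrt (m * Real.log 2 / 2) := by
  set t := 4 * f x₀ with ht
  have h2 := hf.2 t
  have hpos : ∀ x ∈ Finset.univ, 0 < ((2:ℝ)^m)⁻¹ * Real.exp (t * f x) := by
    intro x _; positivity
  have hsumpos : 0 < ∑ x, ((2:ℝ)^m)⁻¹ * Real.exp (t * f x) :=
    Finset.sum_pos hpos Finset.univ_nonempty
  have hS : (∑ x, ((2:ℝ)^m)⁻¹ * Real.exp (t * f x)) ≤ Real.exp (t^2/8) := by
    rwa [Real.log_le_iff_le_exp hsumpos] at h2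
  have hterm : ((2:ℝ)^m)⁻¹ * Real.exp (t * f x₀) ≤
      ∑ x, ((2:ℝ)^m)⁻¹ * Real.exp (t * f x) :=
    Finset.single_le_sum (fun x _ => le_of_lt (hpos x (Finset.mem_univ x))) (Finset.mem_univ x₀)
  have hkey : Real.exp (t * f x₀) ≤ (2:ℝ)^m * Real.exp (t^2/8) := by
    rw [← inv_mul_le_iff₀ (by positivity : (0:ℝ) < (2:ℝ)^m)]
    exact hterm.trans hS
  have hlog : t * f x₀ ≤ (m : ℝ) * Real.log 2 + t^2/8 := by
    have := Real.log_le_log (Real.exp_pos _) hkey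
    rwa [Real.log_exp, Real.log_mul (by positivity) (Real.exp_ne_zero _),
      Real.log_pow, Real.log_exp] at this
  have hsq : f x₀ ^ 2 ≤ (m : ℝ) * Real.log 2 / 2 := by
    rw [ht] at hlog
    nlinarith [hlog]
  calc |f x₀| = Real.sqrt ((f x₀)^2) := (Real.sqrt_sq_eq_abs _).symm
    _ ≤ Real.sqrt ((m : ℝ) * Real.log 2 / 2) := Real.sqrt_le_sqrt hsq

/-- There exists a subgaussian test function realising the total variation distance. -/
lemma exists_subg_test (m : ℕ) (P Q : (Fin m → Bool) → ℝ)
    (hP : IsPMF P) (hQ : IsPMF Q) :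
    ∃ f : (Fin m → Bool) → ℝ, SubgTest m f ∧ dTV m P Q = ∑ x, (P x - Q x) * f x := by
  obtain ⟨-, hP1⟩ := hP
  obtain ⟨-, hQ1⟩ := hQ
  set u : ℝ := ((2:ℝ)^m)⁻¹ with hu
  have hu0 : 0 ≤ u := by positivity
  have husum : ∑ _x : Fin m → Bool, u = 1 := subg_uniform_sum m
  set χ : (Fin m → Bool) → ℝ := fun x => if Q x ≤ P x then 1 else 0 with hχ
  set p : ℝ := ∑ x, u * χ x with hpdef
  have hχ01 : ∀ x, χ x = 0 ∨ χ x = 1 := by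
    intro x; by_cases h : Q x ≤ P x <;> simp [hχ, h]
  have hp0 : 0 ≤ p := Finset.sum_nonneg fun x _ => by
    rcases hχ01 x with h | h <;> simp [h, hu0]
  have hp1 : p ≤ 1 := by
    rw [hpdef, ← husum]
    apply Finset.sum_le_sum
    intro x _
    rcases hχ01 x with h | h <;> simp [h, hu0]
  have hD : ∀ t : ℝ, 0 < 1 - p + p * Real.exp t := by
    intro t
    rcases eq_or_lt_of_le hp1 with h | h
    · rw [h]; simpa using Real.exp_pos t
    · have := mul_nonneg hp0 (Real.exp_pos t).le
      linarith
  refine ⟨fun x => χ x - p, ⟨?_, ?_⟩, ?_⟩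
  · have : ∑ x, u * (χ x - p) = (∑ x, u * χ x) - (∑ _x : Fin m → Bool, u) * p := by
      rw [Finset.sum_mul]
      rw [← Finset.sum_sub_distrib]
      congr 1 with x
      ring
    rw [this, husum, ← hpdef]
    ring
  · intro t
    have hmgf : ∑ x, u * Real.exp (t * (χ x - p)) =
        Real.exp (-(t * p)) * (1 - p + p * Real.exp t) := by
      have hpt : ∀ x, u * Real.exp (t * (χ x - p)) =
          Real.exp (-(t * p)) * (u * (1 + χ x * (Real.exp t - 1))) := by
        intro x
        rcases hχ01 x with h | h
        · simp [h]
          ring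
        · rw [h]
          rw [show t * (1 - p) = t + -(t * p) by ring, Real.exp_add]
          ring
      rw [Finset.sum_congr rfl (fun x _ => hpt x), ← Finset.mul_sum]
      congr 1
      have : ∑ x, u * (1 + χ x * (Real.exp t - 1)) =
          (∑ _x : Fin m → Bool, u) + (∑ x, u * χ x) * (Real.exp t - 1) := by
        rw [Finset.sum_mul, ← Finset.sum_add_distrib]
        congr 1 with x
        ring
      rw [this, husum, ← hpdef]
      ring
    rw [hmgf, Real.log_mul (Real.exp_ne_zero _) (hD t).ne', Real.log_exp]
    have := bernoulli_hoeffding hp0 hp1 t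
    linarith
  · have hsum0 : ∑ x, (P x - Q x) = 0 := by
      rw [Finset.sum_sub_distrib, hP1, hQ1]; ring
    have hpt : ∀ x, (P x - Q x) * (χ x - p) =
        (|P x - Q x| + (P x - Q x)) / 2 - (P x - Q x) * p := by
      intro x
      by_cases h : Q x ≤ P x
      · rw [abs_of_nonneg (by linarith)]
        simp [hχ, h]
        ring
      · rw [abs_of_neg (by linarith [lt_of_not_ge h])]
        simp [hχ, h]
    rw [Finset.sum_congr rfl (fun x _ => hpt x), Finset.sum_sub_distrib]
    have h1 : ∑ x, (|P x - Q x| + (P x - Q x)) / 2 =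
        ((∑ x, |P x - Q x|) + ∑ x, (P x - Q x)) / 2 := by
      rw [← Finset.sum_add_distrib, Finset.sum_div]
    have h2 : ∑ x, (P x - Q x) * p = (∑ x, (P x - Q x)) * p := by
      rw [Finset.sum_mul]
    rw [h1, h2, hsum0, dTV]
    ring

theorem tv_le_dG_le_sqrt_m_tv (m : ℕ) (P Q : (Fin m → Bool) → ℝ)
    (hP : IsPMF P) (hQ : IsPMF Q) :
    dTV m P Q ≤ dG m P Q ∧
    dG m P Q ≤ Real.sqrt (2 * Real.log 2 * m) * dTV m P Q := by
  obtain ⟨f₀, hf₀, hval⟩ := exists_subg_test m P Q hP hQ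
  have hmem : dTV m P Q ∈ {r : ℝ | ∃ f, SubgTest m f ∧ r = ∑ x, (P x - Q x) * f x} :=
    ⟨f₀, hf₀, hval⟩
  have hB : ∀ r ∈ {r : ℝ | ∃ f, SubgTest m f ∧ r = ∑ x, (P x - Q x) * f x},
      r ≤ Real.sqrt (2 * Real.log 2 * m) * dTV m P Q := by
    rintro r ⟨f, hf, rfl⟩
    have h1 : ∑ x, (P x - Q x) * f x ≤
        ∑ x, |P x - Q x| * Real.sqrt ((m:ℝ) * Real.log 2 / 2) := by
      apply Finset.sum_le_sum
      intro x _
      calc (P x - Q x) * f x ≤ |(P x - Q x) * f x| := le_abs_self _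
        _ = |P x - Q x| * |f x| := abs_mul _ _
        _ ≤ |P x - Q x| * Real.sqrt ((m:ℝ) * Real.log 2 / 2) :=
            mul_le_mul_of_nonneg_left (subg_pointwise_bound hf x) (abs_nonneg _)
    have h2 : ∑ x, |P x - Q x| * Real.sqrt ((m:ℝ) * Real.log 2 / 2)
        = (∑ x, |P x - Q x|) * Real.sqrt ((m:ℝ) * Real.log 2 / 2) :=
      (Finset.sum_mul _ _ _).symm
    have h3 : 2 * Real.sqrt ((m:ℝ) * Real.log 2 / 2) = Real.sqrt (2 * Real.log 2 * m) := by
      rw [show (2:ℝ) * Real.log 2 * (m:ℝ) = 2^2 * ((m:ℝ) * Real.log 2 / 2) by ring,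
        Real.sqrt_mul (by norm_num), Real.sqrt_sq (by norm_num)]
    have h4 : (∑ x, |P x - Q x|) = 2 * dTV m P Q := by rw [dTV]; ring
    rw [h2, h4] at h1
    have h5 : 2 * dTV m P Q * Real.sqrt ((m:ℝ) * Real.log 2 / 2)
        = Real.sqrt (2 * Real.log 2 * m) * dTV m P Q := by
      rw [← h3]; ring
    linarith
  have hbdd : BddAbove {r : ℝ | ∃ f, SubgTest m f ∧ r = ∑ x, (P x - Q x) * f x} :=
    ⟨_, fun r hr => hB r hr⟩
  exact ⟨le_csSup hbdd hmem, csSup_le ⟨_, hmem⟩ hB⟩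
end

section
/- Let P and Q be distributions on {0,1}^m and α > 0. Then d_G(P,Q) ≤ 2^{mα/(1+α)} · √(1 + 1/α) · d_{ℓ_{1+α}}(P,Q), where d_G is the subgaussian distance and d_{ℓ_{1+α}}(P,Q) = (Σ_x |P(x)−Q(x)|^{1+α})^{1/(1+α)}. -/
open scoped BigOperators

/-- `s^q ≤ q^q e^{s-q}` for `s ≥ 0`, `q > 0`. -/
lemma aux_rpow_le (q s : ℝ) (hq : 0 < q) (hs : 0 ≤ s) :
    s ^ q ≤ q ^ q * Real.exp (s - q) := by
  rcases eq_or_lt_of_le hs with h | h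
  · rw [← h, Real.zero_rpow hq.ne']
    positivity
  · have hlog := Real.log_le_sub_one_of_pos (show 0 < s / q by positivity)
    rw [Real.log_div h.ne' hq.ne'] at hlog
    calc s ^ q = Real.exp (Real.log s * q) := Real.rpow_def_of_pos h q
      _ ≤ Real.exp (Real.log q * q + (s - q)) := by
          apply Real.exp_le_exp.2
          have h1 : q * (Real.log s - Real.log q) ≤ q * (s / q - 1) :=
            mul_le_mul_of_nonneg_left hlog hq.le
          have h2 : q * (s / q - 1) = s - q := by field_simp
          nlinarith
      _ = q ^ q * Real.exp (s - q) := by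
          rw [Real.rpow_def_of_pos hq, Real.exp_add]

/-- Moment bound for subgaussian test functions: `∑ |f x|^q ≤ 2^m q^{q/2}`. -/
lemma aux_moment (m : ℕ) (f : (Fin m → Bool) → ℝ) (hf : SubgTest m f)
    (q : ℝ) (hq : 1 ≤ q) :
    ∑ x, |f x| ^ q ≤ (2 : ℝ) ^ m * q ^ (q / 2) := by
  have hq0 : 0 < q := lt_of_lt_of_le one_pos hq
  set t : ℝ := 2 * Real.sqrt q with ht_def
  have hsq : Real.sqrt q > 0 := Real.sqrt_pos.2 hq0
  have ht : 0 < t := by positivity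
  have ht2 : t ^ 2 = 4 * q := by
    rw [ht_def, mul_pow, Real.sq_sqrt hq0.le]; ring
  have hN : (0 : ℝ) < (2 : ℝ) ^ m := by positivity
  -- MGF bounds
  have mgf : ∀ s : ℝ, ∑ x, Real.exp (s * f x) ≤ (2 : ℝ) ^ m * Real.exp (s ^ 2 / 8) := by
    intro s
    have h1 := hf.2 s
    have hpos : 0 < ∑ x, ((2 : ℝ) ^ m)⁻¹ * Real.exp (s * f x) :=
      Finset.sum_pos (fun x _ => by positivity) Finset.univ_nonempty
    have h2 : ∑ x, ((2 : ℝ) ^ m)⁻¹ * Real.exp (s * f x) ≤ Real.exp (s ^ 2 / 8) :=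
      (Real.log_le_iff_le_exp hpos).1 h1
    rw [← Finset.mul_sum] at h2
    calc ∑ x, Real.exp (s * f x)
        = (2:ℝ)^m * (((2:ℝ)^m)⁻¹ * ∑ x, Real.exp (s * f x)) := by
          field_simp
      _ ≤ (2:ℝ)^m * Real.exp (s ^ 2 / 8) := mul_le_mul_of_nonneg_left h2 hN.le
  -- pointwise bound
  have hpt : ∀ x, |f x| ^ q ≤ q ^ q * Real.exp (-q) / t ^ q *
      (Real.exp (t * f x) + Real.exp (-t * f x)) := by
    intro x
    have h1 : (t * |f x|) ^ q ≤ q ^ q * Real.exp (t * |f x| - q) :=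
      aux_rpow_le q _ hq0 (by positivity)
    have h2 : (t * |f x|) ^ q = t ^ q * |f x| ^ q :=
      Real.mul_rpow ht.le (abs_nonneg _)
    have h3 : Real.exp (t * |f x|) ≤ Real.exp (t * f x) + Real.exp (-t * f x) := by
      rcases abs_cases (f x) with ⟨h, _⟩ | ⟨h, _⟩
      · rw [h]; nlinarith [Real.exp_pos (-t * f x)]
      · rw [h]
        have he : t * -f x = -t * f x := by ring
        rw [he]; nlinarith [Real.exp_pos (t * f x)]
    have htq : (0:ℝ) < t ^ q := Real.rpow_pos_of_pos ht q
    rw [h2] at h1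
    rw [div_mul_eq_mul_div, le_div_iff₀ htq, mul_comm (|f x| ^ q)]
    calc t ^ q * |f x| ^ q ≤ q ^ q * Real.exp (t * |f x| - q) := h1
      _ = q ^ q * Real.exp (-q) * Real.exp (t * |f x|) := by
          rw [show t * |f x| - q = -q + t * |f x| from by ring, Real.exp_add, ← mul_assoc]
      _ ≤ q ^ q * Real.exp (-q) * (Real.exp (t * f x) + Real.exp (-t * f x)) :=
          mul_le_mul_of_nonneg_left h3 (by positivity)
  have hsqq : (Real.sqrt q) ^ q = q ^ (q/2) := by
    rw [Real.sqrt_eq_rpow, ← Real.rpow_mul hq0.le]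
    congr 1; ring
  have htq : t ^ q = (2:ℝ) ^ q * q ^ (q/2) := by
    rw [ht_def, Real.mul_rpow (by norm_num) hsq.le, hsqq]
  have hqq : q ^ q = q ^ (q/2) * q ^ (q/2) := by
    rw [← Real.rpow_add hq0]; norm_num
  have key : 2 * Real.exp (-q) * Real.exp (q/2) ≤ (2:ℝ) ^ q := by
    have e1 : Real.exp (-q) * Real.exp (q/2) = Real.exp (-q + q/2) :=
      (Real.exp_add _ _).symm
    have e2 : Real.exp (-q + q/2) ≤ 1 := by
      rw [← Real.exp_zero]
      apply Real.exp_le_exp.2; linarith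
    have e3 : (2:ℝ) ^ (1:ℝ) ≤ (2:ℝ) ^ q :=
      Real.rpow_le_rpow_of_exponent_le (by norm_num) hq
    rw [Real.rpow_one] at e3
    nlinarith [Real.exp_pos (-q), Real.exp_pos (q/2)]
  calc ∑ x, |f x| ^ q
      ≤ ∑ x, q ^ q * Real.exp (-q) / t ^ q *
          (Real.exp (t * f x) + Real.exp (-t * f x)) :=
        Finset.sum_le_sum fun x _ => hpt x
    _ = q ^ q * Real.exp (-q) / t ^ q *
          ((∑ x, Real.exp (t * f x)) + ∑ x, Real.exp (-t * f x)) := by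
        rw [← Finset.mul_sum, Finset.sum_add_distrib]
    _ ≤ q ^ q * Real.exp (-q) / t ^ q *
          ((2:ℝ)^m * Real.exp (t^2/8) + (2:ℝ)^m * Real.exp ((-t)^2/8)) := by
        apply mul_le_mul_of_nonneg_left _ (by positivity)
        exact add_le_add (mgf t) (by simpa using mgf (-t))
    _ = (2:ℝ)^m * q ^ (q/2) *
          (2 * Real.exp (-q) * Real.exp (q/2) / (2:ℝ) ^ q) := by
        have h48 : t^2/8 = q/2 := by rw [ht2]; ring
        have h48' : (-t)^2/8 = q/2 := by rw [neg_pow, ht2]; ring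
        rw [h48, h48', htq, hqq]
        have h2q : ((2:ℝ) ^ q) ≠ 0 := (Real.rpow_pos_of_pos (by norm_num) q).ne'
        have hqh : (q ^ (q/2) : ℝ) ≠ 0 := (Real.rpow_pos_of_pos hq0 _).ne'
        field_simp
        ring
    _ ≤ (2 : ℝ) ^ m * q ^ (q / 2) := by
        have h2q : (0:ℝ) < (2:ℝ) ^ q := Real.rpow_pos_of_pos (by norm_num) q
        have : 2 * Real.exp (-q) * Real.exp (q/2) / (2:ℝ) ^ q ≤ 1 :=
          (div_le_one h2q).2 key
        nlinarith [Real.rpow_pos_of_pos hq0 (q/2), hN,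
          mul_pos hN (Real.rpow_pos_of_pos hq0 (q/2))]

theorem dG_le_lp (m : ℕ) (α : ℝ) (hα : 0 < α) (P Q : (Fin m → Bool) → ℝ)
    (hP : IsPMF P) (hQ : IsPMF Q) :
    dG m P Q ≤ (2 : ℝ) ^ ((m * α) / (1 + α)) * Real.sqrt (1 + 1 / α)
      * (∑ x, |P x - Q x| ^ (1 + α)) ^ (1 / (1 + α)) := by
  have hα1 : (0:ℝ) < 1 + α := by linarith
  set q : ℝ := 1 + 1/α with hq_def
  have hq1 : 1 ≤ q := by
    have : 0 < 1/α := by positivity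
    simp [hq_def]; linarith
  have hq0 : 0 < q := lt_of_lt_of_le one_pos hq1
  have hpq : (1 + α).HolderConjugate q := by
    rw [Real.holderConjugate_iff]
    constructor
    · linarith
    · rw [hq_def]; field_simp; ring
  apply Real.sSup_le
  · rintro r ⟨f, hf, rfl⟩
    have holder := Real.inner_le_Lp_mul_Lq (Finset.univ) (fun x => P x - Q x) f hpq
    have hmom : ∑ x, |f x| ^ q ≤ (2 : ℝ) ^ m * q ^ (q / 2) := aux_moment m f hf q hq1
    have hfac : ((2 : ℝ) ^ m * q ^ (q / 2)) ^ (1/q)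
        = (2 : ℝ) ^ ((m * α) / (1 + α)) * Real.sqrt q := by
      have hα0 : α ≠ 0 := hα.ne'
      have hα1' : (1 + α) ≠ 0 := hα1.ne'
      have hexp : (m:ℝ) * (1/q) = (m * α) / (1 + α) := by
        have hq' : q = (1 + α)/α := by rw [hq_def]; field_simp <;> ring
        rw [hq', one_div_div]
        ring
      have hexp2 : (q/2) * (1/q) = (1/2 : ℝ) := by
        field_simp
      rw [Real.mul_rpow (by positivity) (by positivity),
        ← Real.rpow_natCast (2:ℝ) m, ← Real.rpow_mul (by norm_num), hexp,
        ← Real.rpow_mul hq0.le, hexp2, Real.sqrt_eq_rpow]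
    have h2 : (∑ x, |f x| ^ q) ^ (1/q) ≤ ((2 : ℝ) ^ m * q ^ (q / 2)) ^ (1/q) :=
      Real.rpow_le_rpow (Finset.sum_nonneg fun x _ => by positivity) hmom (by positivity)
    rw [hfac] at h2
    have hA : (0:ℝ) ≤ (∑ x, |P x - Q x| ^ (1 + α)) ^ (1 / (1 + α)) := by positivity
    calc ∑ x, (P x - Q x) * f x
        ≤ (∑ x, |P x - Q x| ^ (1 + α)) ^ (1 / (1 + α)) * (∑ x, |f x| ^ q) ^ (1/q) :=
          holder
      _ ≤ (∑ x, |P x - Q x| ^ (1 + α)) ^ (1 / (1 + α)) *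
            ((2 : ℝ) ^ ((m * α) / (1 + α)) * Real.sqrt q) :=
          mul_le_mul_of_nonneg_left h2 hA
      _ = (2 : ℝ) ^ ((m * α) / (1 + α)) * Real.sqrt (1 + 1 / α)
            * (∑ x, |P x - Q x| ^ (1 + α)) ^ (1 / (1 + α)) := by
          rw [hq_def]; ring
  · positivity
end

section
/- Let P be a probability distribution on {0,1}^m. Then the subgaussian distance to uniform satisfies d_G(P, U_m) ≤ √((ln 2 / 2) · KL(P‖U_m)), where KL(P‖U_m) = Σ_x P(x) log₂(P(x)/2^{−m}). -/
open scoped BigOperators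

/-- KL divergence (in bits) from a distribution on `{0,1}^m` to uniform. -/
noncomputable def KLu (m : ℕ) (P : (Fin m → Bool) → ℝ) : ℝ :=
  ∑ x, P x * Real.logb 2 ((2 : ℝ) ^ m * P x)

lemma dv_aux (m : ℕ) (P : (Fin m → Bool) → ℝ) (hP0 : ∀ x, 0 ≤ P x)
    (hP1 : ∑ x, P x = 1) (g : (Fin m → Bool) → ℝ) :
    ∑ x, P x * g x ≤ Real.log (∑ x, ((2 : ℝ) ^ m)⁻¹ * Real.exp (g x))
      + ∑ x, P x * Real.log ((2 : ℝ) ^ m * P x) := by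
  set u : ℝ := ((2 : ℝ) ^ m)⁻¹ with hu
  have hu0 : 0 < u := by positivity
  set S : ℝ := ∑ x, u * Real.exp (g x) with hS
  have hS0 : 0 < S := Finset.sum_pos (fun x _ => by positivity) ⟨fun _ => true, Finset.mem_univ _⟩
  have key : ∀ x, P x * g x - P x * Real.log ((2 : ℝ) ^ m * P x)
      ≤ u * Real.exp (g x) / S - P x + P x * Real.log S := by
    intro x
    rcases eq_or_lt_of_le (hP0 x) with h0 | hpos
    · rw [← h0]; simp; positivity
    · have hy : 0 < u * Real.exp (g x) / (S * P x) := by positivity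
      have h1 := Real.log_le_sub_one_of_pos hy
      have hlog : Real.log (u * Real.exp (g x) / (S * P x))
          = Real.log u + g x - Real.log S - Real.log (P x) := by
        rw [Real.log_div (by positivity) (by positivity),
          Real.log_mul (ne_of_gt hu0) (Real.exp_ne_zero _), Real.log_exp,
          Real.log_mul (ne_of_gt hS0) (ne_of_gt hpos)]
        ring
      have hlu : Real.log ((2 : ℝ) ^ m * P x) = -Real.log u + Real.log (P x) := by
        rw [Real.log_mul (by positivity) (ne_of_gt hpos), hu, Real.log_inv]
        ring
      have h2 := mul_le_mul_of_nonneg_left h1 (le_of_lt hpos)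
      have h3 : P x * (u * Real.exp (g x) / (S * P x)) = u * Real.exp (g x) / S := by
        field_simp
      rw [hlog] at h2
      rw [hlu]
      nlinarith [h2, h3]
  have hsum : ∑ x, (P x * g x - P x * Real.log ((2 : ℝ) ^ m * P x))
      ≤ ∑ x, (u * Real.exp (g x) / S - P x + P x * Real.log S) :=
    Finset.sum_le_sum (fun x _ => key x)
  have e1 : ∑ x, (P x * g x - P x * Real.log ((2 : ℝ) ^ m * P x))
      = ∑ x, P x * g x - ∑ x, P x * Real.log ((2 : ℝ) ^ m * P x) := Finset.sum_sub_distrib _ _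
  have e2 : ∑ x, (u * Real.exp (g x) / S - P x + P x * Real.log S)
      = S / S - 1 + Real.log S := by
    rw [Finset.sum_add_distrib, Finset.sum_sub_distrib, ← Finset.sum_div, ← hS, hP1,
      ← Finset.sum_mul, hP1, one_mul]
  rw [e1, e2, div_self (ne_of_gt hS0)] at hsum
  linarith

theorem dG_le_sqrt_kl (m : ℕ) (P : (Fin m → Bool) → ℝ) (hP : IsPMF P) :
    dG m P (fun _ => ((2 : ℝ) ^ m)⁻¹) ≤ Real.sqrt ((Real.log 2 / 2) * KLu m P) := by
  obtain ⟨hP0, hP1⟩ := hP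
  set u : ℝ := ((2 : ℝ) ^ m)⁻¹ with hu
  set D : ℝ := ∑ x, P x * Real.log ((2 : ℝ) ^ m * P x) with hDdef
  have husum : ∑ _x : Fin m → Bool, u = 1 := by
    rw [Finset.sum_const, Finset.card_univ]
    simp [Fintype.card_fun, hu]
  have hD0 : 0 ≤ D := by
    have h := dv_aux m P hP0 hP1 (fun _ => 0)
    simp only [mul_zero, Finset.sum_const_zero, Real.exp_zero, mul_one] at h
    rw [husum, Real.log_one] at h
    linarith
  have hDKL : Real.log 2 * KLu m P = D := by
    rw [KLu, hDdef, Finset.mul_sum]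
    refine Finset.sum_congr rfl fun x _ => ?_
    rw [Real.logb, mul_comm (Real.log 2), mul_assoc,
      div_mul_cancel₀ _ (Real.log_pos (by norm_num)).ne']
  have hRHS : (Real.log 2 / 2) * KLu m P = D / 2 := by
    rw [div_mul_eq_mul_div, hDKL]
  rw [hRHS]
  apply Real.sSup_le _ (Real.sqrt_nonneg _)
  rintro r ⟨f, ⟨hf0, hft⟩, rfl⟩
  have hsplit : ∑ x, (P x - u) * f x = ∑ x, P x * f x := by
    simp only [sub_mul]
    rw [Finset.sum_sub_distrib, hf0, sub_zero]
  rw [hsplit]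
  set Sf : ℝ := ∑ x, P x * f x with hSf
  have hkey : ∀ t : ℝ, t * Sf ≤ t ^ 2 / 8 + D := by
    intro t
    have h := dv_aux m P hP0 hP1 (fun x => t * f x)
    have e : ∑ x, P x * (t * f x) = t * Sf := by
      rw [hSf, Finset.mul_sum]; exact Finset.sum_congr rfl fun x _ => by ring
    rw [e] at h
    have := hft t
    linarith
  rcases le_or_gt Sf 0 with h | h
  · exact h.trans (Real.sqrt_nonneg _)
  · have h4 := hkey (4 * Sf)
    have hsq : Sf ^ 2 ≤ D / 2 := by nlinarith
    calc Sf = Real.sqrt (Sf ^ 2) := by rw [Real.sqrt_sq h.le]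
    _ ≤ Real.sqrt (D / 2) := Real.sqrt_le_sqrt hsq
end

section
/- Let G be a D-regular graph on vertex set {0,1}^n with spectral expansion λ, and let Γ : {0,1}^n × [D] → {0,1}^n be a neighbor function of G. Then for every 0 ≤ k ≤ n, Γ is a (k, λ√(2^{−k}−2^{−n})) ℓ₂-extractor: for every distribution X on {0,1}^n with min-entropy at least k, d_{ℓ₂}(Γ(X, U_{[D]}), U_n) ≤ λ·√(2^{−k}−2^{−n}). -/
open scoped BigOperators

/-- The random-walk (transition matrix) operator of the graph on `{0,1}^n`
given by the neighbor function `Γ` with degree `D`: applied to a mass function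
`P`, it gives the mass function of `Γ(x, i)` for `x ∼ P` and `i` uniform. -/
noncomputable def walkOp (n D : ℕ) (Γ : (Fin n → Bool) → Fin D → (Fin n → Bool))
    (P : (Fin n → Bool) → ℝ) : (Fin n → Bool) → ℝ :=
  fun v => (D : ℝ)⁻¹ * ∑ u, ∑ i, if Γ u i = v then P u else 0

/-- Expander neighbor functions are `ℓ₂`-extractors: if `Γ` is the neighbor
function of a `D`-regular graph on `{0,1}^n` with spectral expansion `λ`
(encoded by the contraction of `walkOp` on mean-zero vectors), then for every
source `X` of min-entropy at least `k`, the output distribution is within `ℓ₂`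
distance `λ·√(2^{-k} - 2^{-n})` of uniform. -/
theorem expander_l2_extractor (n D : ℕ) (hD : 0 < D)
    (Γ : (Fin n → Bool) → Fin D → (Fin n → Bool))
    (hreg : ∀ v, (Finset.univ.filter
      (fun p : (Fin n → Bool) × Fin D => Γ p.1 p.2 = v)).card = D)
    (lam : ℝ) (hlam : 0 ≤ lam)
    (hexp : ∀ f : (Fin n → Bool) → ℝ, (∑ v, f v) = 0 →
      Real.sqrt (∑ v, (walkOp n D Γ f v) ^ 2) ≤ lam * Real.sqrt (∑ v, (f v) ^ 2))
    (k : ℝ) (hk0 : 0 ≤ k) (hkn : k ≤ n)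
    (X : (Fin n → Bool) → ℝ) (hX : IsPMF X) (hmin : ∀ x, X x ≤ (2 : ℝ) ^ (-k)) :
    Real.sqrt (∑ v, (walkOp n D Γ X v - ((2 : ℝ) ^ n)⁻¹) ^ 2)
      ≤ lam * Real.sqrt ((2 : ℝ) ^ (-k) - ((2 : ℝ) ^ n)⁻¹) := by
  classical
  set c : ℝ := ((2:ℝ)^n)⁻¹ with hc
  have hcard : (Fintype.card (Fin n → Bool) : ℝ) = (2:ℝ)^n := by
    simp [Fintype.card_fun]
  set f : (Fin n → Bool) → ℝ := fun u => X u - c with hf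
  have hsumc : ∑ _v : (Fin n → Bool), c = 1 := by
    rw [Finset.sum_const, nsmul_eq_mul]
    rw [Finset.card_univ, hcard, hc]
    field_simp
  have hsumf : ∑ v, f v = 0 := by
    simp only [hf, Finset.sum_sub_distrib, hX.2, hsumc, sub_self]
  have hwalk : ∀ v, walkOp n D Γ f v = walkOp n D Γ X v - c := by
    intro v
    have hcnt : ∑ u, ∑ i, (if Γ u i = v then c else 0) = (D:ℝ) * c := by
      rw [← Fintype.sum_prod_type']
      rw [Finset.sum_ite, Finset.sum_const, Finset.sum_const, smul_zero, add_zero,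
        hreg v, nsmul_eq_mul]
    simp only [walkOp, hf]
    have : ∀ u, ∑ i, (if Γ u i = v then X u - c else 0)
        = (∑ i, (if Γ u i = v then X u else 0)) - ∑ i, (if Γ u i = v then c else 0) := by
      intro u
      rw [← Finset.sum_sub_distrib]
      congr 1; funext i; split <;> simp
    rw [Finset.sum_congr rfl (fun u _ => this u), Finset.sum_sub_distrib, mul_sub, hcnt]
    congr 1
    field_simp
  have key := hexp f hsumf
  have hL : ∑ v, (walkOp n D Γ f v) ^ 2 = ∑ v, (walkOp n D Γ X v - c) ^ 2 := by
    apply Finset.sum_congr rfl; intro v _; rw [hwalk v]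
  rw [hL] at key
  refine key.trans ?_
  apply mul_le_mul_of_nonneg_left _ hlam
  apply Real.sqrt_le_sqrt
  have hsq : ∑ v, f v ^ 2 = (∑ v, X v ^ 2) - c := by
    have : ∀ v, f v ^ 2 = X v ^ 2 - 2 * c * X v + c ^ 2 := by
      intro v; simp only [hf]; ring
    rw [Finset.sum_congr rfl (fun v _ => this v)]
    rw [Finset.sum_add_distrib, Finset.sum_sub_distrib, ← Finset.mul_sum, hX.2,
      Finset.sum_const, nsmul_eq_mul, Finset.card_univ, hcard]
    have h2 : (2:ℝ)^n * c ^ 2 = c := by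
      rw [hc]; field_simp
    rw [h2]; ring
  rw [hsq]
  have hX2 : ∑ v, X v ^ 2 ≤ (2:ℝ) ^ (-k) := by
    calc ∑ v, X v ^ 2 ≤ ∑ v, (2:ℝ) ^ (-k) * X v := by
          apply Finset.sum_le_sum
          intro v _
          rw [pow_two]
          exact mul_le_mul_of_nonneg_right (hmin v) (hX.1 v)
      _ = (2:ℝ) ^ (-k) := by rw [← Finset.mul_sum, hX.2, mul_one]
  linarith
end

section
/- Let Ext : {0,1}^n × {0,1}^d → {0,1}^m be an (n − log₂(1/δ), ε) extractor for the weak divergence D^F induced by a class of test functions F : {0,1}^m → ℝ. Then Samp : {0,1}^n → ({0,1}^m)^D with D = 2^d, defined by Samp(x)_i = Ext(x, i), is a (δ, ε) averaging sampler for F: for every f ∈ F, Pr_{x∼U_n}[ (1/D)Σ_i f(Ext(x,i)) − E[f(U_m)] > ε ] ≤ δ. -/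
open scoped BigOperators

/-- Extractors for the divergence induced by a class of test functions `F`
are averaging samplers for `F`. -/
theorem extractor_to_sampler (n d m : ℕ) (δ ε : ℝ) (hδ : 0 < δ)
    (F : Set ((Fin m → Bool) → ℝ))
    (Ext : (Fin n → Bool) → (Fin d → Bool) → (Fin m → Bool))
    (hExt : ∀ X : (Fin n → Bool) → ℝ, IsPMF X →
      (∀ x, X x ≤ (2 : ℝ) ^ (-((n : ℝ) - Real.logb 2 (1 / δ)))) →
      ∀ f ∈ F,
        (∑ x, ∑ s, X x * ((2 : ℝ) ^ d)⁻¹ * f (Ext x s))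
          - (∑ y, ((2 : ℝ) ^ m)⁻¹ * f y) ≤ ε) :
    ∀ f ∈ F,
      ((Finset.univ.filter (fun x : Fin n → Bool =>
          ε < (((2 : ℝ) ^ d)⁻¹ * ∑ s, f (Ext x s))
                - ∑ y, ((2 : ℝ) ^ m)⁻¹ * f y)).card : ℝ)
        ≤ δ * 2 ^ n := by
  intro f hf
  set μ : ℝ := ∑ y, ((2 : ℝ) ^ m)⁻¹ * f y with hμ
  set g : (Fin n → Bool) → ℝ := fun x => ((2 : ℝ) ^ d)⁻¹ * ∑ s, f (Ext x s) with hg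
  set B : Finset (Fin n → Bool) :=
    Finset.univ.filter (fun x => ε < g x - μ) with hB
  by_contra hlt
  push_neg at hlt
  have hBpos : 0 < (B.card : ℝ) := lt_of_le_of_lt (by positivity) hlt
  have hBne : B.Nonempty := by
    rw [← Finset.card_pos]
    exact_mod_cast hBpos
  set X : (Fin n → Bool) → ℝ := fun x => if x ∈ B then ((B.card : ℝ))⁻¹ else 0 with hX
  have hsum : ∑ x, X x = 1 := by
    rw [hX]
    rw [Finset.sum_ite_mem, Finset.univ_inter, Finset.sum_const, nsmul_eq_mul,
      mul_inv_cancel₀ (ne_of_gt hBpos)]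
  have hPMF : IsPMF X := by
    refine ⟨fun x => ?_, hsum⟩
    rw [hX]
    dsimp only
    split <;> positivity
  have hbound : ∀ x, X x ≤ (2 : ℝ) ^ (-((n : ℝ) - Real.logb 2 (1 / δ))) := by
    have hrhs : (2 : ℝ) ^ (-((n : ℝ) - Real.logb 2 (1 / δ))) = (δ * 2 ^ n)⁻¹ := by
      rw [neg_sub, Real.rpow_sub (by norm_num), Real.rpow_logb (by norm_num) (by norm_num)
        (by positivity), Real.rpow_natCast]
      field_simp
    intro x
    rw [hrhs, hX]
    dsimp only
    split
    · exact inv_anti₀ (by positivity) (le_of_lt hlt)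
    · positivity
  have key := hExt X hPMF hbound f hf
  -- rewrite the double sum
  have hrw : (∑ x, ∑ s, X x * ((2 : ℝ) ^ d)⁻¹ * f (Ext x s))
      = ∑ x ∈ B, ((B.card : ℝ))⁻¹ * g x := by
    have h1 : ∀ x, (∑ s, X x * ((2 : ℝ) ^ d)⁻¹ * f (Ext x s)) = X x * g x := by
      intro x
      rw [hg]
      dsimp only
      rw [Finset.mul_sum, Finset.mul_sum]
      apply Finset.sum_congr rfl
      intro s _
      ring
    rw [Finset.sum_congr rfl (fun x _ => h1 x)]
    simp only [hX]
    simp only [ite_mul, zero_mul]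
    rw [Finset.sum_ite_mem, Finset.univ_inter]
  rw [hrw] at key
  have hlb : (1 : ℝ) * (μ + ε) < ∑ x ∈ B, ((B.card : ℝ))⁻¹ * g x := by
    have : ∑ x ∈ B, ((B.card : ℝ))⁻¹ * (μ + ε) < ∑ x ∈ B, ((B.card : ℝ))⁻¹ * g x := by
      apply Finset.sum_lt_sum_of_nonempty hBne
      intro x hx
      have hx' : ε < g x - μ := (Finset.mem_filter.mp hx).2
      have : μ + ε < g x := by linarith
      exact mul_lt_mul_of_pos_left this (inv_pos.mpr hBpos)
    calc (1 : ℝ) * (μ + ε) = ∑ x ∈ B, ((B.card : ℝ))⁻¹ * (μ + ε) := by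
          rw [Finset.sum_const, nsmul_eq_mul, ← mul_assoc,
            mul_inv_cancel₀ (ne_of_gt hBpos)]
      _ < _ := this
  rw [one_mul] at hlb
  linarith
end

section
/- Let H be a collection of ε-almost universal hash functions from {0,1}^n to {0,1}^m (i.e., for all x ≠ y, Pr_{h∼H}[h(x)=h(y)] ≤ (1+ε)/2^m). Then for every joint distribution (Z,X) with H̃_∞(X|Z) ≥ m + log₂(1/ε), E_{z∼Z}[ D₂( (H, H(X|_{Z=z})) ‖ (U_H, U_m) ) ] ≤ (2/ln 2)·ε, where D₂ denotes the Rényi divergence of order 2 and (H, H(X)) is the distribution of (h, h(x)) for independent h ∼ uniform on H, x ∼ X. -/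
open scoped BigOperators

lemma lhl_collision_bound {n m : ℕ} {ε : ℝ} (hε : 0 ≤ ε) {ι : Type} [Fintype ι] [Nonempty ι]
    (h : ι → (Fin n → Bool) → (Fin m → Bool))
    (hUniv : ∀ x y : Fin n → Bool, x ≠ y →
      ((Finset.univ.filter fun i : ι => h i x = h i y).card : ℝ)
        ≤ (1 + ε) / 2 ^ m * Fintype.card ι)
    (p : (Fin n → Bool) → ℝ) (hp0 : ∀ x, 0 ≤ p x) (hp1 : ∑ x, p x = 1) :
    ∑ i : ι, ∑ y : Fin m → Bool,
        (∑ x ∈ Finset.univ.filter (fun x : Fin n → Bool => h i x = y), p x) ^ 2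
      ≤ (Fintype.card ι : ℝ) * ((∑ x, p x ^ 2) + (1 + ε) / 2 ^ m) := by
  classical
  have step1 : ∀ i : ι, ∑ y : Fin m → Bool,
      (∑ x ∈ Finset.univ.filter (fun x : Fin n → Bool => h i x = y), p x) ^ 2
      = ∑ x, ∑ x', if h i x = h i x' then p x * p x' else 0 := by
    intro i
    have e1 : ∀ y : Fin m → Bool,
        (∑ x ∈ Finset.univ.filter (fun x : Fin n → Bool => h i x = y), p x) ^ 2
        = ∑ x ∈ Finset.univ.filter (fun x : Fin n → Bool => h i x = y),
            (∑ x', if h i x = h i x' then p x * p x' else 0) := by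
      intro y
      rw [sq, Finset.sum_mul]
      refine Finset.sum_congr rfl fun x hx => ?_
      have hxy : h i x = y := (Finset.mem_filter.1 hx).2
      rw [Finset.mul_sum, ← Finset.sum_filter]
      refine Finset.sum_congr ?_ fun _ _ => rfl
      ext x'
      simp [hxy, eq_comm]
    calc ∑ y : Fin m → Bool,
        (∑ x ∈ Finset.univ.filter (fun x : Fin n → Bool => h i x = y), p x) ^ 2
        = ∑ y : Fin m → Bool, ∑ x ∈ Finset.univ.filter (fun x : Fin n → Bool => h i x = y),
            (∑ x', if h i x = h i x' then p x * p x' else 0) :=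
          Finset.sum_congr rfl fun y _ => e1 y
      _ = ∑ x, ∑ x', if h i x = h i x' then p x * p x' else 0 :=
          Finset.sum_fiberwise_of_maps_to (fun x _ => Finset.mem_univ (h i x)) _
  have step2 : ∑ i : ι, ∑ y : Fin m → Bool,
      (∑ x ∈ Finset.univ.filter (fun x : Fin n → Bool => h i x = y), p x) ^ 2
      = ∑ x, ∑ x', ((Finset.univ.filter fun i : ι => h i x = h i x').card : ℝ)
          * (p x * p x') := by
    rw [Finset.sum_congr rfl fun i _ => step1 i, Finset.sum_comm]
    refine Finset.sum_congr rfl fun x _ => ?_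
    rw [Finset.sum_comm]
    refine Finset.sum_congr rfl fun x' _ => ?_
    rw [Finset.sum_ite, Finset.sum_const, Finset.sum_const_zero, add_zero, nsmul_eq_mul]
  rw [step2]
  have hcard : (0:ℝ) ≤ (Fintype.card ι : ℝ) := Nat.cast_nonneg _
  have key : ∀ x : Fin n → Bool,
      ∑ x', ((Finset.univ.filter fun i : ι => h i x = h i x').card : ℝ) * (p x * p x')
      ≤ (Fintype.card ι : ℝ) * (p x ^ 2 + (1 + ε) / 2 ^ m * (p x * ∑ x', p x')) := by
    intro x
    rw [← Finset.add_sum_erase _ _ (Finset.mem_univ x)]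
    have hdiag : ((Finset.univ.filter fun i : ι => h i x = h i x).card : ℝ) * (p x * p x)
        = (Fintype.card ι : ℝ) * p x ^ 2 := by
      simp [Finset.filter_true_of_mem, sq]
    rw [hdiag]
    have hoff : ∑ x' ∈ Finset.univ.erase x,
        ((Finset.univ.filter fun i : ι => h i x = h i x').card : ℝ) * (p x * p x')
        ≤ (1 + ε) / 2 ^ m * (Fintype.card ι : ℝ) * (p x * ∑ x', p x') := by
      calc ∑ x' ∈ Finset.univ.erase x,
          ((Finset.univ.filter fun i : ι => h i x = h i x').card : ℝ) * (p x * p x')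
          ≤ ∑ x' ∈ Finset.univ.erase x,
            ((1 + ε) / 2 ^ m * (Fintype.card ι : ℝ)) * (p x * p x') := by
            refine Finset.sum_le_sum fun x' hx' => ?_
            exact mul_le_mul_of_nonneg_right
              (hUniv x x' (Ne.symm (Finset.ne_of_mem_erase hx')))
              (mul_nonneg (hp0 x) (hp0 x'))
        _ ≤ ∑ x', ((1 + ε) / 2 ^ m * (Fintype.card ι : ℝ)) * (p x * p x') := by
            refine Finset.sum_le_sum_of_subset_of_nonneg (Finset.erase_subset _ _)
              fun x' _ _ => ?_
            have h2 : (0:ℝ) ≤ (1 + ε) / 2 ^ m := by positivity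
            exact mul_nonneg (mul_nonneg h2 hcard) (mul_nonneg (hp0 x) (hp0 x'))
        _ = (1 + ε) / 2 ^ m * (Fintype.card ι : ℝ) * (p x * ∑ x', p x') := by
            rw [Finset.mul_sum, Finset.mul_sum]
    rw [mul_add]
    exact add_le_add le_rfl (hoff.trans_eq (by ring))
  calc ∑ x, ∑ x', ((Finset.univ.filter fun i : ι => h i x = h i x').card : ℝ) * (p x * p x')
      ≤ ∑ x, (Fintype.card ι : ℝ) * (p x ^ 2 + (1 + ε) / 2 ^ m * (p x * ∑ x', p x')) :=
        Finset.sum_le_sum fun x _ => key x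
    _ = (Fintype.card ι : ℝ) * ((∑ x, p x ^ 2) + (1 + ε) / 2 ^ m) := by
        rw [hp1, ← Finset.mul_sum]
        congr 1
        rw [Finset.sum_add_distrib]
        congr 1
        rw [← Finset.mul_sum]
        simp [hp1]

/-- The Leftover Hash Lemma for Rényi divergence of order 2: hashing with an
`ε`-almost universal family is an average-case `D₂`-extractor. -/
theorem leftover_hash_lemma (n m : ℕ) (ε : ℝ) (hε : 0 < ε)
    (ι : Type) [Fintype ι] [Nonempty ι]
    (h : ι → (Fin n → Bool) → (Fin m → Bool))
    (hUniv : ∀ x y : Fin n → Bool, x ≠ y →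
      ((Finset.univ.filter fun i : ι => h i x = h i y).card : ℝ)
        ≤ (1 + ε) / 2 ^ m * Fintype.card ι)
    (ζ : Type) [Fintype ζ]
    (J : ζ × (Fin n → Bool) → ℝ) (hJ : IsPMF J)
    (hHmin : ∑ z, (Finset.univ.sup' Finset.univ_nonempty fun x => J (z, x))
      ≤ (2 : ℝ) ^ (-((m : ℝ) + Real.logb 2 (1 / ε)))) :
    ∑ z, (∑ x, J (z, x)) *
        Real.logb 2 ((Fintype.card ι : ℝ) * 2 ^ m *
          ∑ i : ι, ∑ y : Fin m → Bool,
            ((Fintype.card ι : ℝ)⁻¹ *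
              ∑ x ∈ Finset.univ.filter (fun x : Fin n → Bool => h i x = y),
                J (z, x) / ∑ x', J (z, x')) ^ 2)
      ≤ (2 / Real.log 2) * ε := by
  classical
  obtain ⟨hJ0, hJ1⟩ := hJ
  have hlog2 : (0:ℝ) < Real.log 2 := Real.log_pos (by norm_num)
  have h2m : (0:ℝ) < (2:ℝ) ^ m := by positivity
  have hcι : (0:ℝ) < (Fintype.card ι : ℝ) := by exact_mod_cast Fintype.card_pos
  have hSnn : ∀ z : ζ, 0 ≤ Finset.univ.sup' Finset.univ_nonempty fun x : Fin n → Bool => J (z, x) := by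
    intro z
    exact le_trans (hJ0 (z, fun _ => false))
      (Finset.le_sup' (fun x : Fin n → Bool => J (z, x)) (Finset.mem_univ (fun _ => false)))
  have main : ∀ z : ζ,
      (∑ x, J (z, x)) * Real.logb 2 ((Fintype.card ι : ℝ) * 2 ^ m *
          ∑ i : ι, ∑ y : Fin m → Bool,
            ((Fintype.card ι : ℝ)⁻¹ *
              ∑ x ∈ Finset.univ.filter (fun x : Fin n → Bool => h i x = y),
                J (z, x) / ∑ x', J (z, x')) ^ 2)
      ≤ (ε * (∑ x, J (z, x)) + 2 ^ m *
          (Finset.univ.sup' Finset.univ_nonempty fun x => J (z, x))) / Real.log 2 := by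
    intro z
    set Pz := ∑ x, J (z, x) with hPzdef
    set Sz := Finset.univ.sup' Finset.univ_nonempty fun x : Fin n → Bool => J (z, x) with hSzdef
    have hPnn : 0 ≤ Pz := Finset.sum_nonneg fun x _ => hJ0 _
    have hRHSnn : 0 ≤ (ε * Pz + 2 ^ m * Sz) / Real.log 2 :=
      div_nonneg (add_nonneg (mul_nonneg hε.le hPnn) (mul_nonneg h2m.le (hSnn z))) hlog2.le
    set A := (Fintype.card ι : ℝ) * 2 ^ m *
          ∑ i : ι, ∑ y : Fin m → Bool,
            ((Fintype.card ι : ℝ)⁻¹ *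
              ∑ x ∈ Finset.univ.filter (fun x : Fin n → Bool => h i x = y),
                J (z, x) / Pz) ^ 2 with hAdef
    rcases eq_or_lt_of_le hPnn with hP0 | hPpos
    · have hSz0 : 0 ≤ Sz := hSnn z
      rw [← hP0, zero_mul]
      simp only [mul_zero, zero_add]
      exact div_nonneg (mul_nonneg h2m.le hSz0) hlog2.le
    · set p : (Fin n → Bool) → ℝ := fun x => J (z, x) / Pz with hpdef
      have hp0 : ∀ x, 0 ≤ p x := fun x => div_nonneg (hJ0 _) hPnn
      have hp1 : ∑ x, p x = 1 := by
        rw [hpdef, ← Finset.sum_div]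
        exact div_self hPpos.ne'
      have hcp : ∑ x, p x ^ 2 ≤ Sz / Pz := by
        calc ∑ x, p x ^ 2 ≤ ∑ x, (Sz / Pz) * p x := by
              refine Finset.sum_le_sum fun x _ => ?_
              rw [sq]
              refine mul_le_mul_of_nonneg_right ?_ (hp0 x)
              show J (z, x) / Pz ≤ Sz / Pz
              exact (div_le_div_iff_of_pos_right hPpos).mpr
                (Finset.le_sup' (fun x : Fin n → Bool => J (z, x)) (Finset.mem_univ x))
          _ = Sz / Pz := by rw [← Finset.mul_sum, hp1, mul_one]
      have hT := lhl_collision_bound hε.le h hUniv p hp0 hp1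
      have hAbound : A ≤ 2 ^ m * (Sz / Pz) + (1 + ε) := by
        calc A = (Fintype.card ι : ℝ) * 2 ^ m * (((Fintype.card ι : ℝ)⁻¹) ^ 2 *
              ∑ i : ι, ∑ y : Fin m → Bool,
                (∑ x ∈ Finset.univ.filter (fun x : Fin n → Bool => h i x = y), p x) ^ 2) := by
              rw [hAdef]
              simp only [hpdef]
              simp_rw [mul_pow, ← Finset.mul_sum]
          _ ≤ (Fintype.card ι : ℝ) * 2 ^ m * (((Fintype.card ι : ℝ)⁻¹) ^ 2 *
              ((Fintype.card ι : ℝ) * ((∑ x, p x ^ 2) + (1 + ε) / 2 ^ m))) := by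
              gcongr
          _ = 2 ^ m * (∑ x, p x ^ 2) + (1 + ε) := by
              field_simp
          _ ≤ 2 ^ m * (Sz / Pz) + (1 + ε) := by gcongr
      have hAnn : 0 ≤ A := by
        rw [hAdef]
        have : (0:ℝ) ≤ ∑ i : ι, ∑ y : Fin m → Bool,
            ((Fintype.card ι : ℝ)⁻¹ *
              ∑ x ∈ Finset.univ.filter (fun x : Fin n → Bool => h i x = y),
                J (z, x) / Pz) ^ 2 :=
          Finset.sum_nonneg fun i _ => Finset.sum_nonneg fun y _ => sq_nonneg _
        positivity
      rcases eq_or_lt_of_le hAnn with hA0 | hApos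
      · rw [← hA0, Real.logb_zero, mul_zero]
        exact hRHSnn
      · have hlogA : Real.logb 2 A ≤ (A - 1) / Real.log 2 := by
          rw [Real.logb]
          exact (div_le_div_iff_of_pos_right hlog2).mpr (Real.log_le_sub_one_of_pos hApos)
        calc Pz * Real.logb 2 A ≤ Pz * ((A - 1) / Real.log 2) :=
              mul_le_mul_of_nonneg_left hlogA hPnn
          _ = Pz * (A - 1) / Real.log 2 := by ring
          _ ≤ (ε * Pz + 2 ^ m * Sz) / Real.log 2 := by
              rw [div_le_div_iff_of_pos_right hlog2]
              have h1 : A - 1 ≤ ε + 2 ^ m * (Sz / Pz) := by linarith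
              have h2 := mul_le_mul_of_nonneg_left h1 hPnn
              have h3 : Pz * (ε + 2 ^ m * (Sz / Pz)) = ε * Pz + 2 ^ m * Sz := by
                field_simp
              rw [h3] at h2
              exact h2
  calc ∑ z, (∑ x, J (z, x)) *
        Real.logb 2 ((Fintype.card ι : ℝ) * 2 ^ m *
          ∑ i : ι, ∑ y : Fin m → Bool,
            ((Fintype.card ι : ℝ)⁻¹ *
              ∑ x ∈ Finset.univ.filter (fun x : Fin n → Bool => h i x = y),
                J (z, x) / ∑ x', J (z, x')) ^ 2)
      ≤ ∑ z, (ε * (∑ x, J (z, x)) + 2 ^ m *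
          (Finset.univ.sup' Finset.univ_nonempty fun x => J (z, x))) / Real.log 2 :=
        Finset.sum_le_sum fun z _ => main z
    _ = (ε * (∑ z, ∑ x, J (z, x)) + 2 ^ m *
          ∑ z, (Finset.univ.sup' Finset.univ_nonempty fun x => J (z, x))) / Real.log 2 := by
        rw [← Finset.sum_div]
        congr 1
        rw [Finset.sum_add_distrib, ← Finset.mul_sum, ← Finset.mul_sum]
    _ ≤ (ε * 1 + 2 ^ m * ((2 : ℝ) ^ (-((m : ℝ) + Real.logb 2 (1 / ε))))) / Real.log 2 := by
        have hsum1 : ∑ z, ∑ x, J (z, x) = 1 := by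
          rw [← hJ1]
          exact (Fintype.sum_prod_type _).symm
        rw [hsum1]
        gcongr
    _ = (2 / Real.log 2) * ε := by
        have hrpow : (2:ℝ) ^ (-((m : ℝ) + Real.logb 2 (1 / ε))) = ((2:ℝ) ^ m)⁻¹ * ε := by
          rw [neg_add, Real.rpow_add (by norm_num : (0:ℝ) < 2), Real.rpow_neg (by norm_num : (0:ℝ) ≤ 2),
            Real.rpow_natCast, Real.rpow_neg (by norm_num : (0:ℝ) ≤ 2),
            Real.rpow_logb (by norm_num : (0:ℝ) < 2) (by norm_num) (by positivity), one_div, inv_inv]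
        rw [hrpow]
        field_simp
        ring
end
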